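/- Let a, b ∈ ℝ and let u₀ : ℝ → ℝ be continuously differentiable. Define, for x ∈ ℝ and all t with 6bt + 1 > 0, w(t,x) := a (6bt + 1)^{−1/3} − b x² / (6bt + 1) and u(t,x) := u₀( x (6bt + 1)^{−1/3} ) · (6bt + 1)^{−1/3}. Then the pair (w, u) satisfies the transformed system ∂_t w = (1/2) ∂_xx(w²) and ∂_t u = ∂_x(u ∂_x w) on this domain, with w(0,x) = a − b x² and u(0,x) = u₀(x). -/

import Mathlib

open Real Set

/-- Partial derivative in the first (time) variable. -/
noncomputable def pt (f : ℝ → ℝ → ℝ) (t x : ℝ) : ℝ := deriv (fun s => f s x) t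

/-- Partial derivative in the second (space) variable. -/
noncomputable def px (f : ℝ → ℝ → ℝ) (t x : ℝ) : ℝ := deriv (fun y => f t y) x

/-- The pair `w(t,x) = a(6bt+1)^{-1/3} − bx²/(6bt+1)`,
`u(t,x) = u₀(x(6bt+1)^{-1/3})(6bt+1)^{-1/3}` satisfies the transformed system
`∂ₜw = (1/2)∂ₓₓ(w²)`, `∂ₜu = ∂ₓ(u ∂ₓw)` wherever `6bt + 1 > 0`,
with `w(0,x) = a − bx²` and `u(0,x) = u₀(x)`. -/
theorem stmt_9 (a b : ℝ) (u₀ : ℝ → ℝ) (hu₀ : ContDiff ℝ 1 u₀)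
    (w u : ℝ → ℝ → ℝ)
    (hw : w = fun t x => a * (6 * b * t + 1) ^ (-(1/3) : ℝ) - b * x ^ 2 / (6 * b * t + 1))
    (hu : u = fun t x =>
      u₀ (x * (6 * b * t + 1) ^ (-(1/3) : ℝ)) * (6 * b * t + 1) ^ (-(1/3) : ℝ)) :
    (∀ t : ℝ, 0 < 6 * b * t + 1 → ∀ x : ℝ,
      pt w t x = (1/2) * px (px (fun s y => (w s y) ^ 2)) t x ∧
      pt u t x = px (fun s y => u s y * px w s y) t x) ∧
    (∀ x : ℝ, w 0 x = a - b * x ^ 2) ∧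
    (∀ x : ℝ, u 0 x = u₀ x) := by
  subst hw hu
  refine ⟨?_, ?_, ?_⟩
  · intro t ht x
    simp only [pt, px]
    have hc : (0:ℝ) < 6 * b * t + 1 := ht
    have hcne : (6 * b * t + 1 : ℝ) ≠ 0 := ne_of_gt hc
    set c : ℝ := 6 * b * t + 1 with hc_def
    set e : ℝ := c ^ (-(1/3) : ℝ) with he_def
    have he4 : c ^ ((-(1/3) : ℝ) - 1) = e / c := by
      rw [he_def, Real.rpow_sub hc, Real.rpow_one]
    -- time derivative of s ↦ 6*b*s+1
    have hφ : ∀ s : ℝ, HasDerivAt (fun s : ℝ => 6 * b * s + 1) (6 * b) s := by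
      intro s
      simpa using ((hasDerivAt_id s).const_mul (6 * b)).add_const (1 : ℝ)
    have hrp : HasDerivAt (fun s : ℝ => (6 * b * s + 1) ^ (-(1/3) : ℝ))
        (6 * b * (-(1/3)) * c ^ ((-(1/3) : ℝ) - 1)) t := by
      exact (hφ t).rpow_const (Or.inl hcne)
    -- spatial derivative of w at time t
    have hwx : ∀ y : ℝ, HasDerivAt (fun y : ℝ => a * e - b * y ^ 2 / c)
        (-(2 * b * y / c)) y := by
      intro y
      have h1 : HasDerivAt (fun y : ℝ => b * y ^ 2 / c) (2 * b * y / c) y := by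
        have := ((hasDerivAt_pow 2 y).const_mul b).div_const c
        exact this.congr_deriv (by simp; ring)
      exact ((hasDerivAt_const y (a * e)).sub h1).congr_deriv (by ring)
    have hwx' : ∀ y : ℝ, deriv (fun y : ℝ => a * e - b * y ^ 2 / c) y = -(2 * b * y / c) :=
      fun y => (hwx y).deriv
    constructor
    · -- w equation
      have hwt : HasDerivAt (fun s : ℝ => a * (6 * b * s + 1) ^ (-(1/3) : ℝ)
            - b * x ^ 2 / (6 * b * s + 1))
          (a * (6 * b * (-(1/3)) * c ^ ((-(1/3) : ℝ) - 1))
            - (0 * c - b * x ^ 2 * (6 * b)) / c ^ 2) t :=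
        (hrp.const_mul a).sub ((hasDerivAt_const t (b * x ^ 2)).div (hφ t) hcne)
      rw [hwt.deriv]
      have hsq : ∀ y : ℝ, deriv (fun y' : ℝ => (a * e - b * y' ^ 2 / c) ^ 2) y
          = 2 * (a * e - b * y ^ 2 / c) * (-(2 * b * y / c)) := by
        intro y
        have := ((hwx y).pow 2).deriv
        exact this.trans (by norm_num)
      simp only [hsq]
      have houter : HasDerivAt
          (fun y : ℝ => 2 * (a * e - b * y ^ 2 / c) * (-(2 * b * y / c)))
          (2 * (-(2 * b * x / c)) * (-(2 * b * x / c))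
            + 2 * (a * e - b * x ^ 2 / c) * (-(2 * b / c))) x := by
        have h1 : HasDerivAt (fun y : ℝ => 2 * (a * e - b * y ^ 2 / c))
            (2 * (-(2 * b * x / c))) x := (hwx x).const_mul 2
        have h2 : HasDerivAt (fun y : ℝ => -(2 * b * y / c)) (-(2 * b / c)) x := by
          have := (((hasDerivAt_id x).const_mul (2 * b)).div_const c).neg
          exact this.congr_deriv (by ring)
        exact h1.mul h2
      rw [houter.deriv, he4]
      field_simp
      ring
    · -- u equation
      have hdiff : DifferentiableAt ℝ u₀ (x * e) :=
        (hu₀.differentiable one_ne_zero).differentiableAt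
      have hinner : HasDerivAt (fun s : ℝ => x * (6 * b * s + 1) ^ (-(1/3) : ℝ))
          (x * (6 * b * (-(1/3)) * c ^ ((-(1/3) : ℝ) - 1))) t := hrp.const_mul x
      have hcomp : HasDerivAt (fun s : ℝ => u₀ (x * (6 * b * s + 1) ^ (-(1/3) : ℝ)))
          (deriv u₀ (x * e) * (x * (6 * b * (-(1/3)) * c ^ ((-(1/3) : ℝ) - 1)))) t := by
        have := hdiff.hasDerivAt.comp t hinner
        exact this
      have hut : HasDerivAt (fun s : ℝ => u₀ (x * (6 * b * s + 1) ^ (-(1/3) : ℝ))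
            * (6 * b * s + 1) ^ (-(1/3) : ℝ))
          (deriv u₀ (x * e) * (x * (6 * b * (-(1/3)) * c ^ ((-(1/3) : ℝ) - 1))) * e
            + u₀ (x * e) * (6 * b * (-(1/3)) * c ^ ((-(1/3) : ℝ) - 1))) t :=
        hcomp.mul hrp
      rw [hut.deriv]
      simp only [hwx']
      -- spatial derivative of u at time t
      have hux : ∀ y : ℝ, HasDerivAt (fun y : ℝ => u₀ (y * e) * e)
          (deriv u₀ (y * e) * e * e) y := by
        intro y
        have hdy : DifferentiableAt ℝ u₀ (y * e) :=
          (hu₀.differentiable one_ne_zero).differentiableAt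
        have hin : HasDerivAt (fun y : ℝ => y * e) e y := by
          simpa using (hasDerivAt_id y).mul_const e
        have := (hdy.hasDerivAt.comp y hin).mul_const e
        simpa [Function.comp, mul_comm] using this
      have hrhs : HasDerivAt (fun y : ℝ => u₀ (y * e) * e * (-(2 * b * y / c)))
          (deriv u₀ (x * e) * e * e * (-(2 * b * x / c))
            + u₀ (x * e) * e * (-(2 * b / c))) x := by
        have h2 : HasDerivAt (fun y : ℝ => -(2 * b * y / c)) (-(2 * b / c)) x := by
          have := (((hasDerivAt_id x).const_mul (2 * b)).div_const c).neg
          exact this.congr_deriv (by ring)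
        exact (hux x).mul h2
      rw [hrhs.deriv, he4]
      field_simp
      ring
  · intro x
    norm_num
  · intro x
    norm_num
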